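/- Let 1 ≤ m < n be integers and let x_1, …, x_m ∈ ℤ^n be linearly independent vectors over ℚ with |x_1|_∞ ≤ ⋯ ≤ |x_m|_∞ (sup-norms). Then there exists a vector hyperplane H of ℚ^n containing x_1, …, x_m whose height satisfies H(H) ≤ m! · |x_m|_∞^m. -/

import Mathlib

lemma det_natAbs_le {k : ℕ} (B : Matrix (Fin k) (Fin k) ℤ) (β : ℕ)
    (h : ∀ i j, (B i j).natAbs ≤ β) : B.det.natAbs ≤ k.factorial * β ^ k := by
  rw [Matrix.det_apply]
  calc (∑ σ : Equiv.Perm (Fin k), Equiv.Perm.sign σ • ∏ i, B (σ i) i).natAbs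
      ≤ ∑ σ : Equiv.Perm (Fin k), (Equiv.Perm.sign σ • ∏ i, B (σ i) i).natAbs :=
        nat_abs_sum_le _ _
    _ ≤ ∑ _σ : Equiv.Perm (Fin k), β ^ k := by
        refine Finset.sum_le_sum fun σ _ => ?_
        have hterm : (Equiv.Perm.sign σ • ∏ i, B (σ i) i).natAbs
            = (∏ i, B (σ i) i).natAbs := by
          rcases Int.units_eq_one_or (Equiv.Perm.sign σ) with hs | hs <;>
            simp [hs, Units.smul_def]
        rw [hterm]
        have hp : (∏ i, B (σ i) i).natAbs = ∏ i, (B (σ i) i).natAbs := map_prod Int.natAbsHom (fun i => B (σ i) i) Finset.univ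
        rw [hp]
        calc ∏ i, (B (σ i) i).natAbs ≤ ∏ _i : Fin k, β :=
              Finset.prod_le_prod' fun i _ => h _ _
          _ = β ^ k := by simp
    _ = k.factorial * β ^ k := by
        rw [Finset.sum_const, Finset.card_univ, Fintype.card_perm, Fintype.card_fin, smul_eq_mul]

open Submodule Matrix Module in
lemma exists_cols (m n : ℕ) (hmn : m ≤ n) (A : Matrix (Fin m) (Fin n) ℚ)
    (hli : LinearIndependent ℚ (fun i => A i)) :
    ∃ g : Fin m → Fin n, Function.Injective g ∧
      (Matrix.of fun i k => A i (g k)).det ≠ 0 := by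
  have hrank : A.rank = m := by
    have := hli.rank_matrix (M := A)
    simpa using this
  have hdim : Module.finrank ℚ (span ℚ (Set.range Aᵀ)) = Module.finrank ℚ (Fin m → ℚ) := by
    rw [show Set.range Aᵀ = Set.range A.col from rfl, ← Matrix.rank_eq_finrank_span_cols, hrank]
    simp
  have hspan : span ℚ (Set.range Aᵀ) = ⊤ := Submodule.eq_top_of_finrank_eq hdim
  obtain ⟨t, hts, htspan, htli⟩ := exists_linearIndependent ℚ (Set.range Aᵀ)
  rw [hspan] at htspan
  let b : Basis t ℚ (Fin m → ℚ) := Basis.mk htli (by rw [Subtype.range_coe, htspan])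
  have : Fintype t := FiniteDimensional.fintypeBasisIndex b
  have hcard : Fintype.card t = m := by
    have := Module.finrank_eq_card_basis b
    rw [Module.finrank_fin_fun] at this
    omega
  let e : Fin m ≃ t := (Fintype.equivFinOfCardEq hcard).symm
  let v : Fin m → (Fin m → ℚ) := fun k => ((e k : t) : Fin m → ℚ)
  have hv : ∀ k, ∃ j, Aᵀ j = v k := fun k => hts (e k).2
  choose g hg using hv
  have hvb : ⇑(b.reindex e.symm) = v := by
    funext k
    simp [v, b, Basis.reindex_apply, Basis.mk_apply]
  have hdet : IsUnit ((Pi.basisFun ℚ (Fin m)).det v) := by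
    rw [← hvb]
    exact Basis.isUnit_det _ _
  have hdet2 : (Matrix.of fun i k => A i (g k)).det ≠ 0 := by
    have hmat : (Matrix.of fun i k => A i (g k)) = (Pi.basisFun ℚ (Fin m)).toMatrix v := by
      funext i k
      rw [Basis.toMatrix_apply]
      simp [← hg k, Matrix.transpose_apply]
    rw [hmat, ← Basis.det_apply]
    exact hdet.ne_zero
  refine ⟨g, ?_, hdet2⟩
  intro k1 k2 hk
  have : v k1 = v k2 := by rw [← hg k1, ← hg k2, hk]
  have := Subtype.coe_injective this
  exact e.injective this

section Main
open Finset

/-- Linearly independent integer vectors `x 0, …, x (m-1)` in `ℤⁿ` with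
nondecreasing sup-norms lie in a common rational hyperplane (given by a primitive
integer normal vector `y`) of height at most `m! · |x_{m-1}|_∞^m`. -/
theorem hyperplane_through_integer_vectors
    (m n : ℕ) (hm : 1 ≤ m) (hmn : m < n) (x : Fin m → Fin n → ℤ)
    (hli : LinearIndependent ℚ fun i => fun j => ((x i j : ℚ)))
    (hmono : Monotone fun i => Finset.univ.sup fun j => (x i j).natAbs) :
    ∃ y : Fin n → ℤ, y ≠ 0 ∧ Finset.univ.gcd y = 1 ∧
      (∀ i, ∑ j, y j * x i j = 0) ∧
      (Finset.univ.sup fun j => (y j).natAbs) ≤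
        m.factorial *
          (Finset.univ.sup fun j => (x ⟨m - 1, by omega⟩ j).natAbs) ^ m := by
  classical
  set β : ℕ := Finset.univ.sup fun j => (x ⟨m - 1, by omega⟩ j).natAbs with hβdef
  have hβ : ∀ (r : Fin m) (j : Fin n), (x r j).natAbs ≤ β := by
    intro r j
    have h1 : (x r j).natAbs ≤ Finset.univ.sup fun j => (x r j).natAbs :=
      Finset.le_sup (f := fun j => (x r j).natAbs) (Finset.mem_univ j)
    have h2 : (Finset.univ.sup fun j => (x r j).natAbs) ≤
        Finset.univ.sup fun j => (x (⟨m - 1, by omega⟩ : Fin m) j).natAbs := by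
      refine hmono ?_
      have := r.isLt
      simp only [Fin.le_def]
      omega
    exact h1.trans h2
  -- step 1: columns
  set A : Matrix (Fin m) (Fin n) ℚ := Matrix.of fun i j => (x i j : ℚ) with hAdef
  obtain ⟨g, hginj, hgdet⟩ := exists_cols m n (le_of_lt hmn) A hli
  -- integer determinant of selected columns is nonzero
  have hDg : (Matrix.of fun r c => x r (g c) : Matrix (Fin m) (Fin m) ℤ).det ≠ 0 := by
    intro h
    apply hgdet
    have hmap := RingHom.map_det (Int.castRingHom ℚ)
      (Matrix.of fun r c => x r (g c) : Matrix (Fin m) (Fin m) ℤ)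
    rw [h] at hmap
    have heq : (Int.castRingHom ℚ).mapMatrix (Matrix.of fun r c => x r (g c)) =
        (Matrix.of fun i k => A i (g k)) := by
      ext i k
      simp [A]
    rw [heq] at hmap
    rw [← hmap]
    simp
  -- extra column
  have hj0 : ∃ j0 : Fin n, j0 ∉ Set.range g := by
    by_contra h
    push_neg at h
    have hsurj : Function.Surjective g := fun j => h j
    have := Fintype.card_le_of_surjective g hsurj
    simp at this
    omega
  obtain ⟨j0, hj0⟩ := hj0
  set σ : Fin (m + 1) → Fin n := Fin.snoc g j0 with hσdef
  have hσc : ∀ k : Fin m, σ k.castSucc = g k := fun k => by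
    rw [hσdef]; simp
  have hσl : σ (Fin.last m) = j0 := by rw [hσdef]; simp
  have hσinj : Function.Injective σ := by
    intro a b hab
    by_cases ha : a = Fin.last m <;> by_cases hb : b = Fin.last m
    · rw [ha, hb]
    · exfalso
      obtain ⟨b', rfl⟩ := Fin.exists_castSucc_eq.2 hb
      rw [ha, hσl, hσc] at hab
      exact hj0 ⟨b', hab.symm⟩
    · exfalso
      obtain ⟨a', rfl⟩ := Fin.exists_castSucc_eq.2 ha
      rw [hb, hσl, hσc] at hab
      exact hj0 ⟨a', hab⟩
    · obtain ⟨a', rfl⟩ := Fin.exists_castSucc_eq.2 ha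
      obtain ⟨b', rfl⟩ := Fin.exists_castSucc_eq.2 hb
      rw [hσc, hσc] at hab
      exact congrArg Fin.castSucc (hginj hab)
  -- minors
  let D : Fin (m + 1) → ℤ :=
    fun k => (Matrix.of fun r c : Fin m => x r (σ (k.succAbove c))).det
  have hDk : ∀ k, D k = (Matrix.of fun r c : Fin m => x r (σ (k.succAbove c))).det :=
    fun _ => rfl
  let y : Fin n → ℤ :=
    fun t => ∑ k : Fin (m + 1), if σ k = t then (-1) ^ (k : ℕ) * D k else 0
  have hyt : ∀ t, y t = ∑ k : Fin (m + 1), if σ k = t then (-1) ^ (k : ℕ) * D k else 0 :=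
    fun _ => rfl
  -- orthogonality
  have horth : ∀ i, ∑ j, y j * x i j = 0 := by
    intro i
    let ρ : Fin (m + 1) → Fin m := Fin.cons i (fun r' => r')
    have hρ0 : ρ 0 = i := rfl
    have hρs : ∀ r, ρ (Fin.succ r) = r := fun r => by simp [ρ]
    let Mi : Matrix (Fin (m + 1)) (Fin (m + 1)) ℤ :=
      Matrix.of fun r c => x (ρ r) (σ c)
    have hM0 : Mi.det = 0 := by
      refine Matrix.det_zero_of_row_eq (i := 0) (j := i.succ) (Fin.succ_ne_zero i).symm ?_
      funext c
      show x (ρ 0) (σ c) = x (ρ i.succ) (σ c)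
      rw [hρ0, hρs]
    calc ∑ j, y j * x i j
        = ∑ j, ∑ k : Fin (m + 1),
            (if σ k = j then ((-1) ^ (k : ℕ) * D k) * x i j else 0) := by
          refine Finset.sum_congr rfl fun j _ => ?_
          rw [hyt j, Finset.sum_mul]
          refine Finset.sum_congr rfl fun k _ => ?_
          rw [ite_mul, zero_mul]
      _ = ∑ k : Fin (m + 1), ∑ j,
            (if σ k = j then ((-1) ^ (k : ℕ) * D k) * x i j else 0) := Finset.sum_comm
      _ = ∑ k : Fin (m + 1), ((-1) ^ (k : ℕ) * D k) * x i (σ k) := by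
          refine Finset.sum_congr rfl fun k _ => ?_
          simp
      _ = ∑ k : Fin (m + 1),
            (-1) ^ (k : ℕ) * Mi 0 k * (Mi.submatrix Fin.succ k.succAbove).det := by
          refine Finset.sum_congr rfl fun k _ => ?_
          have h1 : Mi 0 k = x i (σ k) := by
            show x (ρ 0) (σ k) = x i (σ k)
            rw [hρ0]
          have h2 : (Mi.submatrix Fin.succ k.succAbove).det = D k := by
            rw [hDk]
            congr 1
          rw [h1, h2]
          ring
      _ = Mi.det := (Matrix.det_succ_row_zero Mi).symm
      _ = 0 := hM0
  -- nonvanishing at j0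
  have hDlast : D (Fin.last m)
      = (Matrix.of fun r c => x r (g c) : Matrix (Fin m) (Fin m) ℤ).det := by
    rw [hDk]
    congr 1
    funext r c
    show x r (σ ((Fin.last m).succAbove c)) = x r (g c)
    rw [Fin.succAbove_last, hσc]
  have hyj0 : y j0 ≠ 0 := by
    have hyval : y j0 = (-1) ^ m * D (Fin.last m) := by
      rw [hyt j0]
      rw [Finset.sum_eq_single_of_mem (Fin.last m) (Finset.mem_univ _)]
      · rw [if_pos hσl, Fin.val_last]
      · intro k _ hk
        refine if_neg fun hc => ?_
        obtain ⟨k', rfl⟩ := Fin.exists_castSucc_eq.2 hk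
        rw [hσc] at hc
        exact hj0 ⟨k', hc⟩
    rw [hyval, hDlast]
    intro h
    rcases mul_eq_zero.mp h with h | h
    · exact (pow_ne_zero m (by norm_num) h)
    · exact hDg h
  have hy0 : y ≠ 0 := fun h => hyj0 (by rw [h]; rfl)
  -- bound on each coordinate of y
  have hike : ∀ t, (y t).natAbs ≤ m.factorial * β ^ m := by
    intro t
    by_cases h : ∃ k, σ k = t
    · obtain ⟨k, hk⟩ := h
      have hval : y t = (-1) ^ (k : ℕ) * D k := by
        rw [hyt t]
        rw [Finset.sum_eq_single_of_mem k (Finset.mem_univ _)]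
        · rw [if_pos hk]
        · intro k' _ hk'
          exact if_neg fun hc => hk' (hσinj (hc.trans hk.symm))
      rw [hval, Int.natAbs_mul]
      have h1 : ((-1 : ℤ) ^ (k : ℕ)).natAbs = 1 := by
        rw [Int.natAbs_pow]
        simp
      rw [h1, one_mul, hDk]
      exact det_natAbs_le _ β fun r c => hβ r _
    · have hval : y t = 0 := by
        rw [hyt t]
        exact Finset.sum_eq_zero fun k _ => if_neg fun hc => h ⟨k, hc⟩
      rw [hval]
      simp
  -- divide by gcd
  set d : ℤ := Finset.univ.gcd y with hddef
  have hd0 : d ≠ 0 := by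
    rw [hddef]
    intro h
    exact hyj0 (Finset.gcd_eq_zero_iff.1 h j0 (Finset.mem_univ _))
  have hddvd : ∀ t, d ∣ y t := fun t => Finset.gcd_dvd (Finset.mem_univ t)
  refine ⟨fun t => y t / d, ?_, ?_, ?_, ?_⟩
  · intro h
    apply hyj0
    have h1 := congrFun h j0
    obtain ⟨c, hc⟩ := hddvd j0
    simp only [Pi.zero_apply] at h1
    rw [hc, Int.mul_ediv_cancel_left _ hd0] at h1
    rw [hc, h1, mul_zero]
  · exact Finset.gcd_div_eq_one (Finset.mem_univ j0) hyj0
  · intro i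
    have h1 : d * (∑ j, (y j / d) * x i j) = 0 := by
      rw [Finset.mul_sum]
      calc ∑ j, d * (y j / d * x i j) = ∑ j, y j * x i j := by
            refine Finset.sum_congr rfl fun j _ => ?_
            rw [← mul_assoc, Int.mul_ediv_cancel' (hddvd j)]
        _ = 0 := horth i
    exact (mul_eq_zero.mp h1).resolve_left hd0
  · refine Finset.sup_le fun t _ => ?_
    refine le_trans ?_ (hike t)
    show (y t / d).natAbs ≤ (y t).natAbs
    obtain ⟨c, hc⟩ := hddvd t
    rw [hc, Int.mul_ediv_cancel_left _ hd0, Int.natAbs_mul]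
    exact Nat.le_mul_of_pos_left _ (Nat.pos_of_ne_zero (by simpa using hd0))

end Main
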